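/- Let n ≥ 1, let S be a nondegenerate simplex in ℝⁿ with vertices x⁽¹⁾,…,x⁽ⁿ⁺¹⁾ and basic Lagrange polynomials λ₁,…,λ_{n+1}, and let E be a minimal ellipsoid of S, i.e., an ellipsoid containing S whose volume does not exceed the volume of any ellipsoid containing S. Let s⁽¹⁾,…,s⁽ⁿ⁺¹⁾ be the vertices of a regular simplex inscribed into the closed unit ball B_n, with basic Lagrange polynomials λ′₁,…,λ′_{n+1}. Then max_{x∈E} Σ_{j=1}^{n+1} |λⱼ(x)| = max_{x∈B_n} Σ_{j=1}^{n+1} |λ′ⱼ(x)|. -/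

import Mathlib

/-- `lam` is the family of basic Lagrange polynomials (barycentric coordinates)
of the simplex with vertices `x`. -/
def IsLagrangeBasis {n : ℕ} (x : Fin (n + 1) → EuclideanSpace ℝ (Fin n))
    (lam : Fin (n + 1) → EuclideanSpace ℝ (Fin n) → ℝ) : Prop :=
  ∀ j, (∃ L : EuclideanSpace ℝ (Fin n) →ᵃ[ℝ] ℝ, lam j = ⇑L) ∧
    ∀ i, lam j (x i) = if i = j then 1 else 0

/-- An ellipsoid in ℝⁿ: the image of the closed unit ball under an invertible
affine map. -/
def IsEllipsoid {n : ℕ} (E : Set (EuclideanSpace ℝ (Fin n))) : Prop :=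
  ∃ F : EuclideanSpace ℝ (Fin n) ≃ᵃ[ℝ] EuclideanSpace ℝ (Fin n),
    E = F '' Metric.closedBall 0 1

/-- `E` is a minimal (volume) ellipsoid containing the set `S`. -/
def IsMinimalEllipsoid {n : ℕ} (S E : Set (EuclideanSpace ℝ (Fin n))) : Prop :=
  IsEllipsoid E ∧ S ⊆ E ∧
    ∀ E', IsEllipsoid E' → S ⊆ E' →
      MeasureTheory.volume E ≤ MeasureTheory.volume E'

open Matrix MeasureTheory Finset Pointwise

variable {n : ℕ}

local notation "Es" => EuclideanSpace ℝ (Fin n)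

noncomputable def mhat {n : ℕ} (y : Fin (n+1) → EuclideanSpace ℝ (Fin n)) :
    Matrix (Fin (n+1)) (Fin (n+1)) ℝ :=
  fun i => Fin.snoc (fun j => y i j) 1

lemma mhat_mul_transpose (y : Fin (n+1) → Es) :
    mhat y * (mhat y)ᵀ = Matrix.of (fun i j => (inner ℝ (y i) (y j) : ℝ) + 1) := by
  ext i j
  simp [Matrix.mul_apply, mhat, Fin.sum_univ_castSucc, PiLp.inner_apply,
    RCLike.inner_apply, conj_trivial]
  exact Finset.sum_congr rfl fun _ _ => mul_comm _ _

lemma sq_det_mhat (y : Fin (n+1) → Es) :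
    (mhat y).det ^ 2 = (Matrix.of (fun i j => (inner ℝ (y i) (y j) : ℝ) + 1)).det := by
  rw [← mhat_mul_transpose, Matrix.det_mul, Matrix.det_transpose, sq]

lemma abs_det_mhat_eq_of_gram_eq {y w : Fin (n+1) → Es}
    (h : ∀ i j, (inner ℝ (y i) (y j) : ℝ) = inner ℝ (w i) (w j)) :
    |(mhat y).det| = |(mhat w).det| := by
  have h2 : (mhat y).det ^ 2 = (mhat w).det ^ 2 := by
    rw [sq_det_mhat, sq_det_mhat]
    congr 1
    ext i j
    simp [h]
  rw [← sq_eq_sq₀ (abs_nonneg (mhat y).det) (abs_nonneg (mhat w).det), sq_abs, sq_abs]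
  exact h2

lemma gram_const_eq (hn : 1 ≤ n) (v : Fin (n+1) → Es) (hu : ∀ i, ‖v i‖ = 1)
    {c : ℝ} (hc : ∀ i j, i ≠ j → (inner ℝ (v i) (v j) : ℝ) = c) (hc1 : c ≠ 1) :
    c = -1/n := by
  have hdep : ¬ LinearIndependent ℝ v := by
    intro h
    have := h.fintype_card_le_finrank
    simp only [finrank_euclideanSpace_fin, Fintype.card_fin] at this
    omega
  obtain ⟨g, hg0, i0, hgi0⟩ := Fintype.not_linearIndependent_iff.mp hdep
  set W := ∑ i, g i with hW
  have hself : ∀ j, (inner ℝ (v j) (v j) : ℝ) = 1 := by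
    intro j
    rw [real_inner_self_eq_norm_sq, hu j]; norm_num
  have key : ∀ j, g j * (1 - c) = -(c * W) := by
    intro j
    have h0 : (inner ℝ (v j) (∑ i, g i • v i) : ℝ) = 0 := by rw [hg0, inner_zero_right]
    rw [inner_sum] at h0
    simp only [real_inner_smul_right] at h0
    rw [← Finset.add_sum_erase _ _ (Finset.mem_univ j)] at h0
    have herase : ∀ i ∈ Finset.univ.erase j, g i * (inner ℝ (v j) (v i) : ℝ) = g i * c := by
      intro i hi
      rw [hc j i (Ne.symm (Finset.ne_of_mem_erase hi))]
    rw [Finset.sum_congr rfl herase, hself j] at h0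
    have hsum : ∑ i ∈ Finset.univ.erase j, g i * c = (W - g j) * c := by
      rw [← Finset.sum_mul, Finset.sum_erase_eq_sub (Finset.mem_univ j)]
    rw [hsum] at h0
    ring_nf
    ring_nf at h0
    linarith
  have h1c : (1 : ℝ) - c ≠ 0 := fun h => hc1 (by linarith)
  have hWne : W ≠ 0 := by
    intro h
    apply hgi0
    have := key i0
    rw [h] at this
    simp at this
    rcases this with h' | h' 
    · exact h'
    · exact absurd h' h1c
  have hsumkey : W * (1 - c) = (n+1) * (-(c * W)) := by
    calc W * (1-c) = ∑ j, g j * (1-c) := by rw [← Finset.sum_mul]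
    _ = ∑ _j : Fin (n+1), -(c*W) := Finset.sum_congr rfl fun j _ => key j
    _ = (n+1) * (-(c*W)) := by
          rw [Finset.sum_const, Finset.card_univ, Fintype.card_fin, nsmul_eq_mul]
          push_cast; ring
  have : (1 - c) = (n+1) * (-c) := by
    have h2 : (1-c) * W = ((n+1) * (-c)) * W := by ring_nf; ring_nf at hsumkey; linarith
    exact mul_right_cancel₀ hWne h2
  have hn0 : (n : ℝ) ≠ 0 := Nat.cast_ne_zero.mpr (by omega)
  field_simp
  linarith

lemma sum_gram_eq_zero (hn : 1 ≤ n) (v : Fin (n+1) → Es) (hu : ∀ i, ‖v i‖ = 1)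
    (hc : ∀ i j, i ≠ j → (inner ℝ (v i) (v j) : ℝ) = -1/n) : ∑ i, v i = 0 := by
  have hself : ∀ j, (inner ℝ (v j) (v j) : ℝ) = 1 := by
    intro j; rw [real_inner_self_eq_norm_sq, hu j]; norm_num
  have hn0 : (n : ℝ) ≠ 0 := Nat.cast_ne_zero.mpr (by omega)
  have h : (inner ℝ (∑ i, v i) (∑ j, v j) : ℝ) = 0 := by
    rw [sum_inner]
    have : ∀ i ∈ Finset.univ, (inner ℝ (v i) (∑ j, v j) : ℝ) = 0 := by
      intro i _
      rw [inner_sum, ← Finset.add_sum_erase _ _ (Finset.mem_univ i), hself i,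
        Finset.sum_congr rfl (fun j hj => hc i j (Ne.symm (Finset.ne_of_mem_erase hj))),
        Finset.sum_const]
      simp [Finset.card_erase_of_mem]
      field_simp
      norm_num
    rw [Finset.sum_congr rfl this, Finset.sum_const]
    simp
  exact inner_self_eq_zero.mp h

lemma linIndep_gram (hn : 1 ≤ n) (v : Fin (n+1) → Es) (hu : ∀ i, ‖v i‖ = 1)
    (hc : ∀ i j, i ≠ j → (inner ℝ (v i) (v j) : ℝ) = -1/n) :
    LinearIndependent ℝ (fun i : {i : Fin (n+1) // i ≠ Fin.last n} => v i) := by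
  have hself : ∀ j, (inner ℝ (v j) (v j) : ℝ) = 1 := by
    intro j; rw [real_inner_self_eq_norm_sq, hu j]; norm_num
  have hn0 : (n : ℝ) ≠ 0 := Nat.cast_ne_zero.mpr (by omega)
  rw [Fintype.linearIndependent_iff]
  intro g hg
  set A := ∑ i, g i with hA
  have key : ∀ j : {i : Fin (n+1) // i ≠ Fin.last n}, g j * (1 + 1/n) = A / n := by
    intro j
    have h0 : (inner ℝ (v j) (∑ i, g i • v i) : ℝ) = 0 := by rw [hg, inner_zero_right]
    rw [inner_sum] at h0
    simp only [real_inner_smul_right] at h0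
    rw [← Finset.add_sum_erase _ _ (Finset.mem_univ j), hself j,
      Finset.sum_congr rfl (fun i hi => by
        rw [hc j i (fun h => (Finset.ne_of_mem_erase hi) (Subtype.ext h.symm))]),
      ← Finset.sum_mul, Finset.sum_erase_eq_sub (Finset.mem_univ j)] at h0
    field_simp at h0 ⊢
    linarith
  have hAz : A = 0 := by
    have : A * (1 + 1/n) = A / n * n := by
      calc A * (1+1/n) = ∑ j : {i : Fin (n+1) // i ≠ Fin.last n}, g j * (1+1/n) := by
            rw [← Finset.sum_mul]
      _ = ∑ _j : {i : Fin (n+1) // i ≠ Fin.last n}, A / n := Finset.sum_congr rfl fun j _ => key j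
      _ = A / n * n := by
            rw [Finset.sum_const, Finset.card_univ]
            simp [Fintype.card_subtype_compl, nsmul_eq_mul]
            ring
    field_simp at this
    linarith
  intro i
  have h2 := key i
  rw [hAz, zero_div] at h2
  rcases mul_eq_zero.mp h2 with h | h
  · exact h
  · exfalso
    have hp : (0:ℝ) < 1 + 1/n := by positivity
    linarith

lemma exists_isometry (hn : 1 ≤ n) (v : Fin (n+1) → Es) (hu : ∀ i, ‖v i‖ = 1)
    (hc : ∀ i j, i ≠ j → (inner ℝ (v i) (v j) : ℝ) = -1/n)
    (w : Fin (n+1) → Es) (hw : ∀ i, ‖w i‖ = 1)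
    (hcw : ∀ i j, i ≠ j → (inner ℝ (w i) (w j) : ℝ) = -1/n) :
    ∃ L : Es ≃ₗ[ℝ] Es, (∀ i, L (v i) = w i) ∧ ∀ z, ‖L z‖ = ‖z‖ := by
  haveI : Nonempty {i : Fin (n+1) // i ≠ Fin.last n} :=
    ⟨⟨⟨0, by omega⟩, by intro h; have := congrArg Fin.val h; simp [Fin.last] at this; omega⟩⟩
  have cardeq : Fintype.card {i : Fin (n+1) // i ≠ Fin.last n} = Module.finrank ℝ Es := by
    simp [Fintype.card_subtype_compl, finrank_euclideanSpace_fin]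
  set bv := basisOfLinearIndependentOfCardEqFinrank (linIndep_gram hn v hu hc) cardeq with hbv
  set bw := basisOfLinearIndependentOfCardEqFinrank (linIndep_gram hn w hw hcw) cardeq with hbw
  have hbva : ∀ i, bv i = v i := fun i => by
    rw [hbv, coe_basisOfLinearIndependentOfCardEqFinrank]
  have hbwa : ∀ i, bw i = w i := fun i => by
    rw [hbw, coe_basisOfLinearIndependentOfCardEqFinrank]
  set L := bv.equiv bw (Equiv.refl _) with hL
  have hLb : ∀ i : {i : Fin (n+1) // i ≠ Fin.last n}, L (v i) = w i := by
    intro i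
    rw [← hbva i, ← hbwa i, hL, Module.Basis.equiv_apply, Equiv.refl_apply]
  have gram : ∀ i j, (inner ℝ (v i) (v j) : ℝ) = inner ℝ (w i) (w j) := by
    intro i j
    rcases eq_or_ne i j with rfl | hij
    · rw [real_inner_self_eq_norm_sq, real_inner_self_eq_norm_sq, hu i, hw i]
    · rw [hc i j hij, hcw i j hij]
  have key : ∀ a b : Es, (inner ℝ (L a) (L b) : ℝ) = inner ℝ a b := by
    intro a b
    rw [← bv.sum_repr a, ← bv.sum_repr b]
    rw [map_sum, map_sum]
    rw [sum_inner, sum_inner]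
    refine Finset.sum_congr rfl fun i _ => ?_
    rw [inner_sum, inner_sum]
    refine Finset.sum_congr rfl fun j _ => ?_
    rw [_root_.map_smul, _root_.map_smul]
    simp only [real_inner_smul_left, real_inner_smul_right]
    rw [hbva i, hbva j, hLb, hLb, gram]
  have hnorm : ∀ z, ‖L z‖ = ‖z‖ := by
    intro z
    have := key z z
    rw [real_inner_self_eq_norm_sq, real_inner_self_eq_norm_sq] at this
    exact sq_eq_sq₀ (norm_nonneg _) (norm_nonneg _) |>.mp this
  refine ⟨L, fun i => ?_, hnorm⟩
  rcases eq_or_ne i (Fin.last n) with rfl | hne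
  · have hv0 := sum_gram_eq_zero hn v hu hc
    have hw0 := sum_gram_eq_zero hn w hw hcw
    have hsubv : ∑ i ∈ Finset.univ.erase (Fin.last n), v i
        = ∑ i : {i : Fin (n+1) // i ≠ Fin.last n}, v i :=
      Finset.sum_subtype _ (fun x => by simp) v
    have hsubw : ∑ i ∈ Finset.univ.erase (Fin.last n), w i
        = ∑ i : {i : Fin (n+1) // i ≠ Fin.last n}, w i :=
      Finset.sum_subtype _ (fun x => by simp) w
    have hvsplit : v (Fin.last n) = -∑ i : {i : Fin (n+1) // i ≠ Fin.last n}, v i := by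
      rw [← hsubv]
      have h1 : v (Fin.last n) + ∑ i ∈ Finset.univ.erase (Fin.last n), v i = 0 := by
        rw [Finset.add_sum_erase _ v (Finset.mem_univ _)]; exact hv0
      linear_combination (norm := module) h1
    have hwsplit : w (Fin.last n) = -∑ i : {i : Fin (n+1) // i ≠ Fin.last n}, w i := by
      rw [← hsubw]
      have h1 : w (Fin.last n) + ∑ i ∈ Finset.univ.erase (Fin.last n), w i = 0 := by
        rw [Finset.add_sum_erase _ w (Finset.mem_univ _)]; exact hw0
      linear_combination (norm := module) h1
    rw [hvsplit, map_neg, map_sum, hwsplit]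
    congr 1
    exact Finset.sum_congr rfl fun i _ => hLb i
  · exact hLb ⟨i, hne⟩

lemma det_reg_gram_pos (hn : 1 ≤ n) :
    0 < (Matrix.of fun i j : Fin (n+1) =>
      (if i = j then (1:ℝ) else -1/n) + 1).det := by
  have hn0 : (n:ℝ) ≠ 0 := Nat.cast_ne_zero.mpr (by omega)
  have hn1 : (0:ℝ) < (n:ℝ) + 1 := by positivity
  set a : ℝ := ((n:ℝ)+1)/n with ha
  have hap : 0 < a := by positivity
  have key : (Matrix.of fun i j : Fin (n+1) => (if i = j then (1:ℝ) else -1/n) + 1)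
      = a • (1 + Matrix.replicateCol Unit (fun _ => (1:ℝ)) *
          Matrix.replicateRow Unit (fun _ => ((n:ℝ)-1)/((n:ℝ)+1))) := by
    ext i j
    rcases eq_or_ne i j with rfl | h
    · simp [Matrix.one_apply, Matrix.mul_apply, ha]
      field_simp
      ring
    · simp [Matrix.one_apply, h, Matrix.mul_apply, ha]
      field_simp
      ring
  rw [key, Matrix.det_smul, Matrix.det_one_add_replicateCol_mul_replicateRow]
  have : (fun _ : Fin (n+1) => ((n:ℝ)-1)/((n:ℝ)+1)) ⬝ᵥ (fun _ => (1:ℝ))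
      = ((n:ℝ)+1) * (((n:ℝ)-1)/((n:ℝ)+1)) := by
    simp only [dotProduct, mul_one, Finset.sum_const, Finset.card_univ,
      Fintype.card_fin, nsmul_eq_mul]
    push_cast
    ring
  rw [this]
  have h2 : 1 + ((n:ℝ)+1) * (((n:ℝ)-1)/((n:ℝ)+1)) = (n:ℝ) := by field_simp; ring
  rw [h2]
  have : (0:ℝ) < a ^ Fintype.card (Fin (n+1)) := by positivity
  have hnpos : (0:ℝ) < n := by exact_mod_cast Nat.pos_of_ne_zero (by omega)
  positivity

lemma mhat_update (y : Fin (n+1) → Es) (k : Fin (n+1)) (v : Es) :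
    mhat (Function.update y k v)
      = (mhat y).updateRow k (Fin.snoc (fun j => v j) 1) := by
  ext i j
  rcases eq_or_ne i k with rfl | h
  · simp [mhat, Matrix.updateRow_self]
  · simp [mhat, Matrix.updateRow_ne h, Function.update_of_ne h]

lemma det_updateRow_lin_sum {ι : Type*} [DecidableEq ι] (M : Matrix (Fin (n+1)) (Fin (n+1)) ℝ)
    (k : Fin (n+1)) (t : Finset ι) (c : ι → ℝ) (u : ι → (Fin (n+1) → ℝ)) :
    (M.updateRow k (∑ j ∈ t, c j • u j)).det
      = ∑ j ∈ t, c j * (M.updateRow k (u j)).det := by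
  induction t using Finset.induction with
  | empty =>
      simp only [Finset.sum_empty]
      have : (0 : Fin (n+1) → ℝ) = (0:ℝ) • (0 : Fin (n+1) → ℝ) := by simp
      rw [this, Matrix.det_updateRow_smul]
      simp
  | insert a t hnotmem ih =>
      rw [Finset.sum_insert hnotmem, Matrix.det_updateRow_add, Matrix.det_updateRow_smul,
        Finset.sum_insert hnotmem, ih]

/-- The coefficient vector of the determinant as affine function of row `k`. -/
noncomputable def rowCoeff {n : ℕ} (y : Fin (n+1) → EuclideanSpace ℝ (Fin n)) (k : Fin (n+1)) :
    EuclideanSpace ℝ (Fin n) :=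
  (WithLp.equiv 2 (Fin n → ℝ)).symm
    (fun j => ((mhat y).updateRow k (Fin.snoc (Pi.single j 1) 0)).det)

noncomputable def rowConst {n : ℕ} (y : Fin (n+1) → EuclideanSpace ℝ (Fin n)) (k : Fin (n+1)) :
    ℝ :=
  ((mhat y).updateRow k (Fin.snoc (0 : Fin n → ℝ) 1)).det

lemma det_mhat_update (y : Fin (n+1) → Es) (k : Fin (n+1)) (v : Es) :
    (mhat (Function.update y k v)).det = (inner ℝ (rowCoeff y k) v : ℝ) + rowConst y k := by
  rw [mhat_update]
  have hsplit : (Fin.snoc (fun j => v j) 1 : Fin (n+1) → ℝ)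
      = (Fin.snoc (fun j => v j) 0) + (Fin.snoc (0 : Fin n → ℝ) 1) := by
    refine funext (Fin.lastCases ?_ ?_)
    · simp
    · intro i; simp
  rw [hsplit, Matrix.det_updateRow_add]
  have hsum : (Fin.snoc (fun j => v j) 0 : Fin (n+1) → ℝ)
      = ∑ j : Fin n, v j • (Fin.snoc (Pi.single j 1) 0 : Fin (n+1) → ℝ) := by
    refine funext (Fin.lastCases ?_ ?_)
    · simp
    · intro i
      simp only [Fin.snoc_castSucc, Finset.sum_apply, Pi.smul_apply, smul_eq_mul]
      rw [Finset.sum_eq_single i]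
      · simp
      · intro j _ hji
        simp [Pi.single_apply, Fin.castSucc_inj, (by exact fun h => hji h : j = i → False)]
      · simp
  rw [hsum, det_updateRow_lin_sum]
  rw [PiLp.inner_apply]
  simp only [RCLike.inner_apply, conj_trivial, rowCoeff, rowConst]
  congr 1
lemma isMaxOn_ball_linear {a : Es} (ha : a ≠ 0) (b : ℝ) (v : Es) (hv : ‖v‖ ≤ 1)
    (hmax : ∀ w : Es, ‖w‖ ≤ 1 → |(inner ℝ a w : ℝ) + b| ≤ |(inner ℝ a v : ℝ) + b|) :
    ‖v‖ = 1 ∧ (a = ‖a‖ • v ∨ a = -(‖a‖ • v)) := by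
  have hna : 0 < ‖a‖ := norm_pos_iff.mpr ha
  have hwnorm : ‖((‖a‖⁻¹ : ℝ) • a : Es)‖ ≤ 1 := by
    rw [norm_smul, Real.norm_eq_abs, abs_of_nonneg (by positivity), inv_mul_cancel₀ hna.ne']
  have hwnorm' : ‖(-((‖a‖⁻¹ : ℝ) • a) : Es)‖ ≤ 1 := by rw [norm_neg]; exact hwnorm
  have hia : (inner ℝ a (((‖a‖⁻¹ : ℝ) • a : Es)) : ℝ) = ‖a‖ := by
    rw [real_inner_smul_right, real_inner_self_eq_norm_sq]
    field_simp
  have hia' : (inner ℝ a ((-((‖a‖⁻¹ : ℝ) • a)) : Es) : ℝ) = -‖a‖ := by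
    rw [inner_neg_right, hia]
  have hub : |(inner ℝ a v : ℝ) + b| ≤ ‖a‖ + |b| := by
    refine le_trans (abs_add_le _ _) ?_
    have h1 : |(inner ℝ a v : ℝ)| ≤ ‖a‖ * ‖v‖ := abs_real_inner_le_norm a v
    nlinarith [abs_nonneg b]
  have hlb : ‖a‖ + |b| ≤ |(inner ℝ a v : ℝ) + b| := by
    rcases le_or_gt 0 b with hb | hb
    · have := hmax _ hwnorm
      rw [hia] at this
      rw [abs_of_nonneg (by positivity)] at this
      rw [abs_of_nonneg hb]
      exact this
    · have := hmax _ hwnorm'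
      rw [hia'] at this
      rw [abs_of_nonpos (by linarith)] at this
      rw [abs_of_neg hb]
      calc ‖a‖ + -b = -(-‖a‖ + b) := by ring
      _ ≤ |(inner ℝ a v : ℝ) + b| := this
  have heq : |(inner ℝ a v : ℝ) + b| = ‖a‖ + |b| := le_antisymm hub hlb
  have hinner : |(inner ℝ a v : ℝ)| = ‖a‖ := by
    have h1 : ‖a‖ + |b| ≤ |(inner ℝ a v : ℝ)| + |b| := heq ▸ abs_add_le _ _
    have h2 : |(inner ℝ a v : ℝ)| ≤ ‖a‖ * ‖v‖ := abs_real_inner_le_norm a v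
    nlinarith
  have hv1 : ‖v‖ = 1 := by
    have h2 : |(inner ℝ a v : ℝ)| ≤ ‖a‖ * ‖v‖ := abs_real_inner_le_norm a v
    rw [hinner] at h2
    have : 1 ≤ ‖v‖ := by
      by_contra hlt
      push_neg at hlt
      nlinarith
    linarith
  refine ⟨hv1, ?_⟩
  rcases (abs_eq hna.le).mp hinner with h | h
  · left
    have : (inner ℝ a v : ℝ) = ‖a‖ * ‖v‖ := by rw [hv1, h, mul_one]
    have h3 := inner_eq_norm_mul_iff_real.mp this
    rw [hv1, one_smul] at h3
    exact h3
  · right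
    have : (inner ℝ a (-v) : ℝ) = ‖a‖ * ‖(-v : Es)‖ := by
      rw [inner_neg_right, h, norm_neg, hv1, mul_one, neg_neg]
    have h3 := inner_eq_norm_mul_iff_real.mp this
    rw [norm_neg, hv1, one_smul] at h3
    rw [smul_neg] at h3
    exact h3

lemma det_mhat_update_row_eq (y : Fin (n+1) → Es) (k i : Fin (n+1)) (h : i ≠ k) :
    (inner ℝ (rowCoeff y k) (y i) : ℝ) + rowConst y k = 0 := by
  rw [← det_mhat_update, mhat_update]
  exact Matrix.det_updateRow_eq_zero h

lemma exists_max_det (hn : 1 ≤ n) :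
    ∃ y : Fin (n+1) → Es, (∀ i, ‖y i‖ ≤ 1) ∧
      ∀ w : Fin (n+1) → Es, (∀ i, ‖w i‖ ≤ 1) → |(mhat w).det| ≤ |(mhat y).det| := by
  have hK : IsCompact {y : Fin (n+1) → Es | ∀ i, ‖y i‖ ≤ 1} := by
    have h1 := isCompact_univ_pi (fun _ : Fin (n+1) => (isCompact_closedBall (0:Es) 1))
    convert h1 using 1
    ext y
    simp [Set.mem_univ_pi, Metric.mem_closedBall, dist_zero_right]
  have hcont : Continuous fun y : Fin (n+1) → Es => |(mhat y).det| := by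
    apply Continuous.abs
    apply Continuous.matrix_det
    apply continuous_matrix
    intro i j
    refine Fin.lastCases ?_ (fun j' => ?_) j
    · simpa [mhat] using continuous_const
    · simp only [mhat, Fin.snoc_castSucc]
      fun_prop
  have hne : ({y : Fin (n+1) → Es | ∀ i, ‖y i‖ ≤ 1}).Nonempty :=
    ⟨fun _ => 0, fun i => by simp⟩
  obtain ⟨y, hyK, hymax⟩ := hK.exists_isMaxOn hne hcont.continuousOn
  exact ⟨y, hyK, fun w hw => hymax hw⟩

lemma maximizer_props (hn : 1 ≤ n) (y : Fin (n+1) → Es) (hy : ∀ i, ‖y i‖ ≤ 1)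
    (hmax : ∀ w : Fin (n+1) → Es, (∀ i, ‖w i‖ ≤ 1) → |(mhat w).det| ≤ |(mhat y).det|)
    (hpos : 0 < |(mhat y).det|) :
    (∀ i, ‖y i‖ = 1) ∧ ∀ i j, i ≠ j → (inner ℝ (y i) (y j) : ℝ) = -1/n := by
  have hexne : ∀ k : Fin (n+1), ∃ i : Fin (n+1), i ≠ k := by
    intro k
    by_cases h : k = Fin.last n
    · exact ⟨⟨0, by omega⟩, by
        intro he; rw [h] at he; have := congrArg Fin.val he; simp [Fin.last] at this; omega⟩
    · exact ⟨Fin.last n, fun he => h he.symm⟩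
  have hane : ∀ k, rowCoeff y k ≠ 0 := by
    intro k ha
    obtain ⟨i, hik⟩ := hexne k
    have hb : rowConst y k = 0 := by
      have := det_mhat_update_row_eq y k i hik
      rw [ha, inner_zero_left] at this
      linarith
    have : (mhat y).det = 0 := by
      have h1 := det_mhat_update y k (y k)
      rw [Function.update_eq_self, ha, hb, inner_zero_left] at h1
      linarith
    rw [this] at hpos
    simp at hpos
  have hmaxk : ∀ k, ∀ w : Es, ‖w‖ ≤ 1 →
      |(inner ℝ (rowCoeff y k) w : ℝ) + rowConst y k|
        ≤ |(inner ℝ (rowCoeff y k) (y k) : ℝ) + rowConst y k| := by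
    intro k w hw
    rw [← det_mhat_update, ← det_mhat_update, Function.update_eq_self]
    apply hmax
    intro i
    rcases eq_or_ne i k with rfl | h
    · simpa using hw
    · simpa [Function.update_of_ne h] using hy i
  have hprops : ∀ k, ‖y k‖ = 1 ∧ ∃ c : ℝ, ∀ i, i ≠ k → (inner ℝ (y k) (y i) : ℝ) = c := by
    intro k
    obtain ⟨h1, h2⟩ := isMaxOn_ball_linear (hane k) (rowConst y k) (y k) (hy k) (hmaxk k)
    refine ⟨h1, ?_⟩
    have hnak : 0 < ‖rowCoeff y k‖ := norm_pos_iff.mpr (hane k)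
    rcases h2 with h | h
    · refine ⟨-(rowConst y k) / ‖rowCoeff y k‖, fun i hik => ?_⟩
      have hz := det_mhat_update_row_eq y k i hik
      have : (inner ℝ (rowCoeff y k) (y i) : ℝ) = ‖rowCoeff y k‖ * (inner ℝ (y k) (y i) : ℝ) := by
        conv_lhs => rw [h]
        rw [real_inner_smul_left]
      rw [this] at hz
      rw [eq_div_iff hnak.ne']
      linarith
    · refine ⟨rowConst y k / ‖rowCoeff y k‖, fun i hik => ?_⟩
      have hz := det_mhat_update_row_eq y k i hik
      have : (inner ℝ (rowCoeff y k) (y i) : ℝ) = -(‖rowCoeff y k‖ * (inner ℝ (y k) (y i) : ℝ)) := by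
        conv_lhs => rw [h]
        rw [inner_neg_left, real_inner_smul_left]
      rw [this] at hz
      rw [eq_div_iff hnak.ne']
      linarith
  have hnorm1 : ∀ i, ‖y i‖ = 1 := fun i => (hprops i).1
  choose c hc using fun k => (hprops k).2
  obtain ⟨i1, hi1⟩ := hexne (Fin.last n)
  have hceq : ∀ k l, k ≠ l → c k = c l := by
    intro k l hkl
    rw [← hc k l (Ne.symm hkl), ← hc l k hkl, real_inner_comm]
  set c0 := c (Fin.last n) with hc0
  have hall : ∀ i j, i ≠ j → (inner ℝ (y i) (y j) : ℝ) = c0 := by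
    intro i j hij
    rcases eq_or_ne i (Fin.last n) with rfl | hi
    · exact hc _ j (Ne.symm hij)
    · rw [hc i j (Ne.symm hij)]
      exact hceq i (Fin.last n) hi
  have hc1 : c0 ≠ 1 := by
    intro h
    have heqv : y i1 = y (Fin.last n) := by
      have hns := norm_sub_sq_real (y i1) (y (Fin.last n))
      rw [hall i1 (Fin.last n) hi1, h, hnorm1, hnorm1] at hns
      have : ‖y i1 - y (Fin.last n)‖ ^ 2 = 0 := by rw [hns]; ring
      have h0 := pow_eq_zero_iff (n := 2) (by norm_num) |>.mp this
      exact sub_eq_zero.mp (norm_eq_zero.mp h0)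
    have : (mhat y).det = 0 := by
      apply Matrix.det_zero_of_row_eq hi1
      show (Fin.snoc (fun j => y i1 j) 1 : Fin (n+1) → ℝ) = Fin.snoc (fun j => y (Fin.last n) j) 1
      rw [heqv]
    rw [this] at hpos
    simp at hpos
  exact ⟨hnorm1, fun i j hij => by rw [hall i j hij]; exact gram_const_eq hn y hnorm1 hall hc1⟩



lemma det_mhat_affine (s y : Fin (n+1) → Es) (L : Es →ₗ[ℝ] Es) (t : Es)
    (h : ∀ i, y i = L (s i) + t) :
    (mhat y).det = (mhat s).det * LinearMap.det L := by
  classical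
  set b := (EuclideanSpace.basisFun (Fin n) ℝ).toBasis with hb
  set A := LinearMap.toMatrix b b L with hA
  set Q : Matrix (Fin (n+1)) (Fin (n+1)) ℝ :=
    Fin.snoc (fun k' : Fin n => Fin.snoc (fun j : Fin n => A j k') 0)
             (Fin.snoc (fun j : Fin n => t j) 1) with hQ
  have hrepr : ∀ (x : Es) (j : Fin n), b.repr x j = x j := by
    intro x j
    rw [hb, OrthonormalBasis.coe_toBasis_repr_apply, EuclideanSpace.basisFun_repr]
  have hL : ∀ (x : Es) (j : Fin n), L x j = ∑ k, A j k * x k := by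
    intro x j
    have h1 := LinearMap.toMatrix_mulVec_repr b b L x
    have h2 := congrFun h1 j
    rw [hrepr] at h2
    rw [← h2, Matrix.mulVec, dotProduct]
    exact Finset.sum_congr rfl fun k _ => by rw [hrepr]
  have hprod : mhat y = mhat s * Q := by
    ext i j
    rw [Matrix.mul_apply, Fin.sum_univ_castSucc]
    refine Fin.lastCases ?_ (fun j' => ?_) j
    · simp [mhat, hQ]
    · simp only [mhat, Fin.snoc_castSucc, Fin.snoc_last, hQ]
      rw [h i]
      have : (L (s i) + t) j' = L (s i) j' + t j' := rfl
      rw [this, hL (s i) j']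
      rw [one_mul]
      congr 1
      exact Finset.sum_congr rfl fun k _ => by ring
  have hdetQ : Q.det = A.det := by
    rw [Matrix.det_succ_column Q (Fin.last n), Fin.sum_univ_castSucc]
    have hzero : ∀ k' : Fin n, Q (Fin.castSucc k') (Fin.last n) = 0 := by
      intro k'; simp [hQ]
    have hsum0 : ∀ k' : Fin n,
        (-1 : ℝ) ^ ((Fin.castSucc k' : ℕ) + (Fin.last n : ℕ)) * Q (Fin.castSucc k') (Fin.last n) *
          (Q.submatrix (Fin.castSucc k').succAbove (Fin.last n).succAbove).det = 0 := by
      intro k'; rw [hzero k']; ring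
    rw [Finset.sum_congr rfl fun k' _ => hsum0 k', Finset.sum_const_zero, zero_add]
    have hQll : Q (Fin.last n) (Fin.last n) = 1 := by simp [hQ]
    have hsub : Q.submatrix (Fin.last n).succAbove (Fin.last n).succAbove = Aᵀ := by
      ext k' j'
      simp [Fin.succAbove_last, hQ, Matrix.transpose_apply]
      simp [Matrix.submatrix]
    rw [hQll, hsub, Matrix.det_transpose]
    have : ((-1 : ℝ)) ^ ((Fin.last n : ℕ) + (Fin.last n : ℕ)) = 1 := by
      rw [show ((Fin.last n : ℕ) + (Fin.last n : ℕ)) = 2 * n by simp [Fin.last]; ring]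
      rw [pow_mul]; norm_num
    rw [this, one_mul, one_mul]
  rw [hprod, Matrix.det_mul, hdetQ, hA, LinearMap.det_toMatrix]

lemma volume_affine_image (H : Es ≃ᵃ[ℝ] Es) (A : Set Es) :
    volume (⇑H '' A)
      = ENNReal.ofReal |LinearMap.det (H.linear : Es →ₗ[ℝ] Es)| * volume A := by
  have hdecomp : ⇑H = (fun w => H 0 + w) ∘ ⇑(H.linear : Es →ₗ[ℝ] Es) := by
    funext z
    have := H.toAffineMap.decomp
    have hz : H z = H.linear z + H 0 := by
      rw [show (H z) = H.toAffineMap z from rfl, this]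
      simp
    simp [hz, add_comm]
  rw [hdecomp, Set.image_comp]
  have himg : (fun w => H 0 + w) '' ((H.linear : Es →ₗ[ℝ] Es) '' A)
      = (H 0) +ᵥ ((H.linear : Es →ₗ[ℝ] Es) '' A) := rfl
  rw [himg, measure_vadd, Measure.addHaar_image_linearMap]

lemma one_le_abs_det_of_volume_le (F G : Es ≃ᵃ[ℝ] Es)
    (hmin : volume (⇑F '' Metric.closedBall (0:Es) 1)
      ≤ volume (⇑(G.trans F) '' Metric.closedBall (0:Es) 1)) :
    1 ≤ |LinearMap.det (G.linear : Es →ₗ[ℝ] Es)| := by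
  rw [volume_affine_image, volume_affine_image] at hmin
  have hlin : ((G.trans F).linear : Es →ₗ[ℝ] Es)
      = (F.linear : Es →ₗ[ℝ] Es).comp (G.linear : Es →ₗ[ℝ] Es) := rfl
  rw [hlin, LinearMap.det_comp, abs_mul, ENNReal.ofReal_mul (abs_nonneg _)] at hmin
  have hdF : 0 < |LinearMap.det (F.linear : Es →ₗ[ℝ] Es)| := by
    rw [abs_pos]
    exact (LinearEquiv.isUnit_det' (F.linear : Es ≃ₗ[ℝ] Es)).ne_zero
  have ha0 : ENNReal.ofReal |LinearMap.det (F.linear : Es →ₗ[ℝ] Es)| ≠ 0 :=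
    (ENNReal.ofReal_pos.mpr hdF).ne'
  have hatop : ENNReal.ofReal |LinearMap.det (F.linear : Es →ₗ[ℝ] Es)| ≠ ⊤ :=
    ENNReal.ofReal_ne_top
  rw [mul_assoc] at hmin
  have h1 := (ENNReal.mul_le_mul_iff_right ha0 hatop).mp hmin
  have hv0 : volume (Metric.closedBall (0:Es) 1) ≠ 0 := by
    exact (Metric.measure_closedBall_pos volume (0:Es) one_pos).ne'
  have hvtop : volume (Metric.closedBall (0:Es) 1) ≠ ⊤ :=
    measure_closedBall_lt_top.ne
  rw [mul_comm] at h1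
  have h2 : volume (Metric.closedBall (0:Es) 1) * 1
      ≤ volume (Metric.closedBall (0:Es) 1)
        * ENNReal.ofReal |LinearMap.det (G.linear : Es →ₗ[ℝ] Es)| := by
    rw [mul_one]; exact h1
  have h3 := (ENNReal.mul_le_mul_iff_right hv0 hvtop).mp h2
  exact ENNReal.one_le_ofReal.mp h3

lemma affineMap_ext_on_indep (hn : 1 ≤ n) (v : Fin (n+1) → Es) (hv : AffineIndependent ℝ v)
    (f g : Es →ᵃ[ℝ] ℝ) (h : ∀ i, f (v i) = g (v i)) (z : Es) : f z = g z := by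
  have htop : affineSpan ℝ (Set.range v) = ⊤ :=
    hv.affineSpan_eq_top_iff_card_eq_finrank_add_one.mpr
      (by simp [finrank_euclideanSpace_fin])
  set bA : AffineBasis (Fin (n+1)) ℝ Es := ⟨v, hv, htop⟩ with hbA
  have hcoe : ⇑bA = v := rfl
  have hz := bA.affineCombination_coord_eq_self z
  have hw1 : ∑ i, bA.coord i z = 1 := bA.sum_coord_apply_eq_one z
  have hfg : f ∘ ⇑bA = g ∘ ⇑bA := by
    funext i
    simp only [Function.comp_apply, hcoe]
    exact h i
  calc f z = f (Finset.univ.affineCombination ℝ ⇑bA fun i => bA.coord i z) := by rw [hz]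
  _ = Finset.univ.affineCombination ℝ (f ∘ ⇑bA) (fun i => bA.coord i z) :=
      Finset.map_affineCombination _ _ _ hw1 f
  _ = Finset.univ.affineCombination ℝ (g ∘ ⇑bA) (fun i => bA.coord i z) := by rw [hfg]
  _ = g (Finset.univ.affineCombination ℝ ⇑bA fun i => bA.coord i z) :=
      (Finset.map_affineCombination _ _ _ hw1 g).symm
  _ = g z := by rw [hz]

theorem norm_on_minimal_ellipsoid_eq_norm_of_regular_on_ball
    {n : ℕ} (hn : 1 ≤ n)
    (x : Fin (n + 1) → EuclideanSpace ℝ (Fin n))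
    (hind : AffineIndependent ℝ x)
    (lam : Fin (n + 1) → EuclideanSpace ℝ (Fin n) → ℝ)
    (hlam : IsLagrangeBasis x lam)
    (E : Set (EuclideanSpace ℝ (Fin n)))
    (hE : IsMinimalEllipsoid (convexHull ℝ (Set.range x)) E)
    (s : Fin (n + 1) → EuclideanSpace ℝ (Fin n))
    (hsind : AffineIndependent ℝ s)
    (hsreg : ∃ d : ℝ, ∀ i j, i ≠ j → dist (s i) (s j) = d)
    (hsins : ∀ j, ‖s j‖ = 1)
    (lam' : Fin (n + 1) → EuclideanSpace ℝ (Fin n) → ℝ)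
    (hlam' : IsLagrangeBasis s lam') :
    sSup ((fun z => ∑ j, |lam j z|) '' E) =
      sSup ((fun z => ∑ j, |lam' j z|) ''
        Metric.closedBall (0 : EuclideanSpace ℝ (Fin n)) 1) := by
  classical
  obtain ⟨⟨F, hEF⟩, hsub, hmin⟩ := hE
  set y : Fin (n+1) → EuclideanSpace ℝ (Fin n) := fun i => F.symm (x i) with hy
  have hxy : ∀ i, x i = F (y i) := fun i => by simp [hy]
  have hyball : ∀ i, ‖y i‖ ≤ 1 := by
    intro i
    have hx : x i ∈ E := hsub (subset_convexHull ℝ _ (Set.mem_range_self i))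
    rw [hEF] at hx
    obtain ⟨z, hz, hzeq⟩ := hx
    have hyz : y i = z := by rw [hy]; simp [← hzeq]
    rw [hyz]
    simpa [Metric.mem_closedBall, dist_zero_right] using hz
  have hyind : AffineIndependent ℝ y := by
    have h1 := hind
    rw [show x = ⇑F.toAffineMap ∘ y from funext hxy] at h1
    exact AffineIndependent.of_comp F.toAffineMap h1
  -- s gram facts
  obtain ⟨d, hd⟩ := hsreg
  have hsinj : Function.Injective s := hsind.injective
  have hlastne : (⟨0, by omega⟩ : Fin (n+1)) ≠ Fin.last n := by
    intro h
    have := congrArg Fin.val h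
    simp [Fin.last] at this
    omega
  have hcs : ∀ i j, i ≠ j → (inner ℝ (s i) (s j) : ℝ) = 1 - d^2/2 := by
    intro i j hij
    have h2 : ‖s i - s j‖^2 = d^2 := by rw [← dist_eq_norm, hd i j hij]
    rw [norm_sub_sq_real, hsins i, hsins j] at h2
    linarith
  have hcs1 : (1:ℝ) - d^2/2 ≠ 1 := by
    intro h
    have hd2 : d^2 = 0 := by linarith
    have hd0 : d = 0 := by
      exact pow_eq_zero_iff (n := 2) (by norm_num) |>.mp hd2
    have h3 := hd ⟨0, by omega⟩ (Fin.last n) hlastne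
    rw [hd0] at h3
    exact hlastne (hsinj (dist_eq_zero.mp h3))
  have hcsval := gram_const_eq hn s hsins hcs hcs1
  have hgs : ∀ i j, i ≠ j → (inner ℝ (s i) (s j) : ℝ) = -1/n := fun i j hij => by
    rw [hcs i j hij, hcsval]
  -- |det mhat s| > 0
  have hdets : 0 < |(mhat s).det| := by
    have h2 := sq_det_mhat s
    have hmeq : (Matrix.of fun i j => (inner ℝ (s i) (s j) : ℝ) + 1)
        = (Matrix.of fun i j : Fin (n+1) => (if i = j then (1:ℝ) else -1/n) + 1) := by
      ext i j
      simp only [Matrix.of_apply]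
      rcases eq_or_ne i j with rfl | hij
      · rw [if_pos rfl, real_inner_self_eq_norm_sq, hsins i]; norm_num
      · rw [if_neg hij, hgs i j hij]
    have hpos := det_reg_gram_pos hn
    rw [← hmeq, ← h2] at hpos
    rw [abs_pos]
    intro h0
    rw [h0] at hpos
    simp at hpos
  -- global maximizer
  obtain ⟨m, hmK, hmmax⟩ := exists_max_det hn
  have hsK : ∀ i, ‖s i‖ ≤ 1 := fun i => (hsins i).le
  have hmpos : 0 < |(mhat m).det| := lt_of_lt_of_le hdets (hmmax s hsK)
  obtain ⟨hm1, hmg⟩ := maximizer_props hn m hmK hmmax hmpos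
  have hfm : |(mhat m).det| = |(mhat s).det| := by
    apply abs_det_mhat_eq_of_gram_eq
    intro i j
    rcases eq_or_ne i j with rfl | hij
    · rw [real_inner_self_eq_norm_sq, real_inner_self_eq_norm_sq, hm1 i, hsins i]
    · rw [hmg i j hij, hgs i j hij]
  -- affine equiv G with G (s i) = y i
  haveI : Nonempty {i : Fin (n+1) // i ≠ Fin.last n} := ⟨⟨⟨0, by omega⟩, hlastne⟩⟩
  have hslin := (affineIndependent_iff_linearIndependent_vsub ℝ s (Fin.last n)).mp hsind
  have hylin := (affineIndependent_iff_linearIndependent_vsub ℝ y (Fin.last n)).mp hyind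
  have cardeq : Fintype.card {i : Fin (n+1) // i ≠ Fin.last n}
      = Module.finrank ℝ (EuclideanSpace ℝ (Fin n)) := by
    simp [Fintype.card_subtype_compl, finrank_euclideanSpace_fin]
  set bs := basisOfLinearIndependentOfCardEqFinrank hslin cardeq with hbs
  set byy := basisOfLinearIndependentOfCardEqFinrank hylin cardeq with hbyy
  set L0 := bs.equiv byy (Equiv.refl _) with hL0def
  have hL0 : ∀ i : {i : Fin (n+1) // i ≠ Fin.last n},
      L0 (s i -ᵥ s (Fin.last n)) = y i -ᵥ y (Fin.last n) := by
    intro i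
    have h1 : bs i = s i -ᵥ s (Fin.last n) := by
      rw [hbs, coe_basisOfLinearIndependentOfCardEqFinrank]
    have h2 : byy i = y i -ᵥ y (Fin.last n) := by
      rw [hbyy, coe_basisOfLinearIndependentOfCardEqFinrank]
    rw [← h1, ← h2, hL0def, Module.Basis.equiv_apply, Equiv.refl_apply]
  set t : EuclideanSpace ℝ (Fin n) := y (Fin.last n) - L0 (s (Fin.last n)) with ht
  have hGs : ∀ i, y i = L0 (s i) + t := by
    intro i
    rcases eq_or_ne i (Fin.last n) with rfl | hne
    · rw [ht]; abel
    · have h1 := hL0 ⟨i, hne⟩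
      have h2 : L0 (s i - s (Fin.last n)) = L0 (s i) - L0 (s (Fin.last n)) :=
        map_sub _ _ _
      rw [show (s i -ᵥ s (Fin.last n)) = s i - s (Fin.last n) from rfl, h2] at h1
      rw [show (y i -ᵥ y (Fin.last n)) = y i - y (Fin.last n) from rfl] at h1
      rw [ht]
      linear_combination (norm := module) h1.symm
  set G : EuclideanSpace ℝ (Fin n) ≃ᵃ[ℝ] EuclideanSpace ℝ (Fin n) :=
    (L0.toAffineEquiv).trans (AffineEquiv.constVAdd ℝ _ t) with hG
  have hGapp : ∀ z, G z = L0 z + t := by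
    intro z
    rw [hG]
    simp [AffineEquiv.trans_apply, AffineEquiv.constVAdd_apply]
    abel
  have hGlin : (G.linear : EuclideanSpace ℝ (Fin n) →ₗ[ℝ] EuclideanSpace ℝ (Fin n))
      = (L0 : EuclideanSpace ℝ (Fin n) →ₗ[ℝ] EuclideanSpace ℝ (Fin n)) := rfl
  have hcomp : convexHull ℝ (Set.range x) ⊆ ⇑(G.trans F) '' Metric.closedBall 0 1 := by
    apply convexHull_min
    · rintro _ ⟨i, rfl⟩
      refine ⟨s i, by simpa [Metric.mem_closedBall, dist_zero_right] using hsK i, ?_⟩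
      rw [AffineEquiv.trans_apply, hGapp, ← hGs i, ← hxy i]
    · have hcb : Convex ℝ (Metric.closedBall (0 : EuclideanSpace ℝ (Fin n)) 1) :=
        convex_closedBall 0 1
      have := hcb.affine_image (G.trans F).toAffineMap
      simpa using this
  have hvol := hmin _ ⟨G.trans F, rfl⟩ hcomp
  rw [hEF] at hvol
  have hdetG := one_le_abs_det_of_volume_le F G hvol
  rw [hGlin] at hdetG
  have hdy : (mhat y).det = (mhat s).det * LinearMap.det
      (L0 : EuclideanSpace ℝ (Fin n) →ₗ[ℝ] EuclideanSpace ℝ (Fin n)) :=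
    det_mhat_affine s y _ t hGs
  have hfy : |(mhat s).det| ≤ |(mhat y).det| := by
    rw [hdy, abs_mul]
    nlinarith [hdets, hdetG, abs_nonneg (mhat s).det]
  have hymax : ∀ w : Fin (n+1) → EuclideanSpace ℝ (Fin n), (∀ i, ‖w i‖ ≤ 1) →
      |(mhat w).det| ≤ |(mhat y).det| := by
    intro w hw
    calc |(mhat w).det| ≤ |(mhat m).det| := hmmax w hw
    _ = |(mhat s).det| := hfm
    _ ≤ |(mhat y).det| := hfy
  have hypos : 0 < |(mhat y).det| := lt_of_lt_of_le hdets hfy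
  obtain ⟨hy1, hyg⟩ := maximizer_props hn y hyball hymax hypos
  obtain ⟨Liso, hLs, hLnorm⟩ := exists_isometry hn s hsins hgs y hy1 hyg
  have hLball : ⇑Liso '' Metric.closedBall (0 : EuclideanSpace ℝ (Fin n)) 1
      = Metric.closedBall (0 : EuclideanSpace ℝ (Fin n)) 1 := by
    ext z
    constructor
    · rintro ⟨w, hw, rfl⟩
      simp only [Metric.mem_closedBall, dist_zero_right] at hw ⊢
      rw [hLnorm]
      exact hw
    · intro hz
      refine ⟨Liso.symm z, ?_, by simp⟩
      have hsymm : ‖Liso.symm z‖ = ‖z‖ := by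
        conv_rhs => rw [← Liso.apply_symm_apply z]
        rw [hLnorm]
      simp only [Metric.mem_closedBall, dist_zero_right] at hz ⊢
      rw [hsymm]
      exact hz
  have hfun : ∀ (j : Fin (n+1)) (z : EuclideanSpace ℝ (Fin n)),
      lam j (F (Liso z)) = lam' j z := by
    intro j z
    obtain ⟨Lj, hLj⟩ := (hlam j).1
    obtain ⟨Lj', hLj'⟩ := (hlam' j).1
    set C : EuclideanSpace ℝ (Fin n) →ᵃ[ℝ] ℝ :=
      Lj.comp (F.toAffineMap.comp ((Liso : EuclideanSpace ℝ (Fin n) →ₗ[ℝ]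
        EuclideanSpace ℝ (Fin n)).toAffineMap)) with hC
    have hCapp : ∀ w, C w = lam j (F (Liso w)) := by
      intro w
      rw [hC]
      simp [hLj]
    have hCs : ∀ i, C (s i) = Lj' (s i) := by
      intro i
      rw [hCapp, hLs i, ← hxy i]
      have h1 : lam j (x i) = if i = j then 1 else 0 := (hlam j).2 i
      have h2 : lam' j (s i) = if i = j then 1 else 0 := (hlam' j).2 i
      rw [h1, ← hLj', h2]
    have hext := affineMap_ext_on_indep hn s hsind C Lj' hCs z
    rw [← hCapp, hext, hLj']
  rw [hEF]
  have himg : (fun z => ∑ j, |lam j z|) '' (⇑F '' Metric.closedBall 0 1)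
      = (fun z => ∑ j, |lam' j z|) '' Metric.closedBall 0 1 := by
    rw [Set.image_image]
    conv_lhs => rw [← hLball]
    rw [Set.image_image]
    apply Set.image_congr
    intro z _
    exact Finset.sum_congr rfl fun j _ => by rw [hfun j z]
  rw [himg]
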